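/- Let α > 0 and f ∈ L¹[−π,π]. Define u_f(x) = ∫_{−π}^{π} G(x,y) f(y) dy, where G(x,y) = −(1/2)c_α x y − (1/2)|x−y| + 1/(2c_α) and c_α = α/(1+απ). Then u_f ∈ C¹[−π,π], u_f' is absolutely continuous on [−π,π], −u_f'' = f almost everywhere on (−π,π), and −u_f'(−π) + αu_f(−π) = 0 and u_f'(π) + αu_f(π) = 0. -/

import Mathlib

open MeasureTheory Real Set

/-- The constant `c_α = α/(1+απ)`. -/
noncomputable def cA (α : ℝ) : ℝ := α / (1 + α * π)

/-- The Green's function of the Robin problem on `[-π, π]`. -/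
noncomputable def robinGreen (α x y : ℝ) : ℝ :=
  -(1/2) * cA α * x * y - (1/2) * |x - y| + 1 / (2 * cA α)

/-- The solution of the Robin problem with heat source `f`. -/
noncomputable def robinSol (α : ℝ) (f : ℝ → ℝ) (x : ℝ) : ℝ :=
  ∫ y in (-π)..π, robinGreen α x y * f y

/-- `u` solves the Robin problem on `[-π, π]` with parameter `α` and heat source `f`:
`u` is `C¹` on `[-π,π]` (with derivative `u'`), `u'` is absolutely continuous on `[-π,π]`
(i.e., it is the indefinite integral of an integrable function `u''`), `-u'' = f` almost
everywhere on `(-π, π)`, and the Robin boundary conditions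
`-u'(-π) + α u(-π) = u'(π) + α u(π) = 0` hold. -/
def IsRobinSolution (α : ℝ) (f : ℝ → ℝ) (u : ℝ → ℝ) : Prop :=
  ∃ u' u'' : ℝ → ℝ,
    ContinuousOn u (Icc (-π) π) ∧
    (∀ x ∈ Icc (-π) π, HasDerivWithinAt u (u' x) (Icc (-π) π) x) ∧
    ContinuousOn u' (Icc (-π) π) ∧
    IntegrableOn u'' (Icc (-π) π) ∧
    (∀ x ∈ Icc (-π) π, u' x = u' (-π) + ∫ t in (-π)..x, u'' t) ∧
    (∀ᵐ x ∂(volume.restrict (Ioo (-π) π)), -u'' x = f x) ∧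
    -u' (-π) + α * u (-π) = 0 ∧ u' π + α * u π = 0

lemma repeated_integral {g : ℝ → ℝ} (hg : Integrable g) {a x : ℝ} (hax : a ≤ x) :
    ∫ t in a..x, (∫ y in a..t, g y) = ∫ y in a..x, (x - y) * g y := by
  have hS : MeasurableSet {p : ℝ × ℝ | a < p.2 ∧ p.2 ≤ p.1} :=
    (measurableSet_lt measurable_const measurable_snd).inter
      (measurableSet_le measurable_snd measurable_fst)
  set μ := volume.restrict (Ioc a x) with hμ
  have hint : Integrable (fun p : ℝ × ℝ => g p.2) (μ.prod μ) := by
    have h1 : Integrable (fun _ : ℝ => (1 : ℝ)) μ := by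
      simp [hμ, integrable_const_iff, measure_lt_top]
    have := h1.mul_prod (hg.restrict (s := Ioc a x))
    simpa using this
  have hintInd :
      Integrable (fun p : ℝ × ℝ =>
        ({p : ℝ × ℝ | a < p.2 ∧ p.2 ≤ p.1}).indicator (fun p => g p.2) p) (μ.prod μ) :=
    hint.indicator hS
  have swap := integral_integral_swap (f := fun t y =>
      ({p : ℝ × ℝ | a < p.2 ∧ p.2 ≤ p.1}).indicator (fun p : ℝ × ℝ => g p.2) (t, y))
      (μ := μ) (ν := μ) (by exact hintInd)
  rw [intervalIntegral.integral_of_le hax, intervalIntegral.integral_of_le hax]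
  calc ∫ t in Ioc a x, (∫ y in a..t, g y)
      = ∫ t in Ioc a x, ∫ y in Ioc a x,
          ({p : ℝ × ℝ | a < p.2 ∧ p.2 ≤ p.1}).indicator (fun p : ℝ × ℝ => g p.2) (t, y) := by
        refine setIntegral_congr_fun measurableSet_Ioc (fun t ht => ?_)
        rw [intervalIntegral.integral_of_le ht.1.le]
        have : ∀ y, ({p : ℝ × ℝ | a < p.2 ∧ p.2 ≤ p.1}).indicator
            (fun p : ℝ × ℝ => g p.2) (t, y) = (Ioc a t).indicator g y := by
          intro y
          by_cases hy : a < y ∧ y ≤ t <;> simp [Set.indicator, hy, Set.mem_Ioc]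
        simp_rw [this]
        rw [setIntegral_indicator measurableSet_Ioc]
        congr 1
        rw [Set.inter_eq_right.2 (Ioc_subset_Ioc le_rfl ht.2)]
    _ = ∫ y in Ioc a x, ∫ t in Ioc a x,
          ({p : ℝ × ℝ | a < p.2 ∧ p.2 ≤ p.1}).indicator (fun p : ℝ × ℝ => g p.2) (t, y) := swap
    _ = ∫ y in Ioc a x, (x - y) * g y := by
        refine setIntegral_congr_fun measurableSet_Ioc (fun y hy => ?_)
        have : ∀ t, ({p : ℝ × ℝ | a < p.2 ∧ p.2 ≤ p.1}).indicator
            (fun p : ℝ × ℝ => g p.2) (t, y) = (Ici y).indicator (fun _ => g y) t := by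
          intro t
          by_cases ht : y ≤ t <;> simp [Set.indicator, ht, hy.1]
        simp_rw [this]
        rw [setIntegral_indicator measurableSet_Ici, setIntegral_const]
        have : Ioc a x ∩ Ici y = Icc y x := by
          ext t
          simp only [mem_inter_iff, mem_Ioc, mem_Ici, mem_Icc]
          exact ⟨fun h => ⟨h.2, h.1.2⟩, fun h => ⟨⟨lt_of_lt_of_le hy.1 h.1, h.2⟩, h.1⟩⟩
        rw [this, Real.volume_real_Icc_of_le hy.2, smul_eq_mul]

/-- **The Green's-function representation solves the Robin problem.** -/
theorem robinSol_isRobinSolution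
    (α : ℝ) (hα : 0 < α)
    (f : ℝ → ℝ) (hf : IntegrableOn f (Icc (-π) π)) :
    IsRobinSolution α f (robinSol α f) := by
  have hπ : (-π : ℝ) ≤ π := by linarith [pi_pos]
  have hc1 : (0:ℝ) < 1 + α * π := by positivity
  have hcpos : 0 < cA α := div_pos hα hc1
  have hcmul : cA α * (1 + α * π) = α := div_mul_cancel₀ α hc1.ne'
  set c := cA α with hcdef
  set g := (Icc (-π) π).indicator f with hgdef
  have hg : Integrable g := (integrable_indicator_iff measurableSet_Icc).2 hf
  have hgf : EqOn g f (Icc (-π) π) := fun y hy => Set.indicator_of_mem hy f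
  set F := fun t => ∫ y in (-π)..t, g y with hFdef
  have hFcont : Continuous F := hg.continuous_primitive (-π)
  set V := fun x => ∫ t in (-π)..x, F t with hVdef
  have hVderiv : ∀ x : ℝ, HasDerivAt V (F x) x := fun x =>
    intervalIntegral.integral_hasDerivAt_right (hFcont.intervalIntegrable _ _)
      hFcont.aestronglyMeasurable.stronglyMeasurableAtFilter hFcont.continuousAt
  -- integrability of continuous multiples of f on subintervals of [-π, π]
  have hII : ∀ (φ : ℝ → ℝ), Continuous φ → ∀ a b, a ∈ Icc (-π) π → b ∈ Icc (-π) π →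
      IntervalIntegrable (fun y => φ y * f y) volume a b := by
    intro φ hφ a b ha hb
    obtain ⟨C, hC⟩ := (isCompact_Icc (a := -π) (b := π)).exists_bound_of_continuousOn
      hφ.continuousOn
    have hint : IntegrableOn (fun y => φ y * f y) (Icc (-π) π) := by
      refine Integrable.bdd_mul (c := C) hf hφ.aestronglyMeasurable.restrict ?_
      exact (ae_restrict_iff' measurableSet_Icc).2 (Filter.Eventually.of_forall hC)
    rw [intervalIntegrable_iff]
    exact hint.mono_set (Set.uIoc_subset_uIcc.trans (Set.uIcc_subset_Icc ha hb))
  have hfII : ∀ a b, a ∈ Icc (-π) π → b ∈ Icc (-π) π →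
      IntervalIntegrable f volume a b := by
    intro a b ha hb
    have := hII (fun _ => 1) continuous_const a b ha hb
    simpa using this
  set M₀ := ∫ y in (-π)..π, f y with hM₀
  set M₁ := ∫ y in (-π)..π, y * f y with hM₁
  have hmemπ : π ∈ Icc (-π) π := ⟨hπ, le_rfl⟩
  have hmemnπ : (-π) ∈ Icc (-π) π := ⟨le_rfl, hπ⟩
  -- V x = x * I₀ - I₁ where I₀, I₁ are partial integrals
  have hVeq : ∀ x ∈ Icc (-π) π,
      V x = x * (∫ y in (-π)..x, f y) - ∫ y in (-π)..x, y * f y := by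
    intro x hx
    have h1 : V x = ∫ y in (-π)..x, (x - y) * g y := repeated_integral hg hx.1
    have h2 : ∫ y in (-π)..x, (x - y) * g y = ∫ y in (-π)..x, (x - y) * f y := by
      refine intervalIntegral.integral_congr (fun y hy => ?_)
      rw [Set.uIcc_of_le hx.1] at hy
      rw [hgf (⟨hy.1, hy.2.trans hx.2⟩ : y ∈ Icc (-π) π)]
    have h3 : ∫ y in (-π)..x, (x - y) * f y
        = (∫ y in (-π)..x, x * f y) - ∫ y in (-π)..x, y * f y := by
      rw [← intervalIntegral.integral_sub
        (hII (fun _ => x) continuous_const _ _ hmemnπ hx)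
        (hII (fun y => y) continuous_id _ _ hmemnπ hx)]
      congr 1; ext y; ring
    rw [h1, h2, h3, intervalIntegral.integral_const_mul]
  -- the key representation of robinSol
  have key : ∀ x ∈ Icc (-π) π,
      robinSol α f x = (M₀/(2*c) - M₁/2) + (M₀ - c*M₁)/2 * x - V x := by
    intro x hx
    have habs : Continuous fun y : ℝ => |x - y| :=
      (continuous_const.sub continuous_id).abs
    have hsplit : robinSol α f x =
        (-(1/2)*c*x) * M₁ + (-(1/2)) * (∫ y in (-π)..π, |x - y| * f y) + (1/(2*c)) * M₀ := by
      have hint1 := (hII (fun y => y) continuous_id (-π) π hmemnπ hmemπ).const_mul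
        (-(1/2)*c*x)
      have hint2 := (hII (fun y => |x - y|) habs (-π) π hmemnπ hmemπ).const_mul (-(1/2))
      have hint3 := (hfII (-π) π hmemnπ hmemπ).const_mul (1/(2*c))
      have heq : ∀ y, robinGreen α x y * f y =
          (fun y => (-(1/2)*c*x) * (y * f y)) y + (fun y => (-(1/2)) * (|x - y| * f y)) y
            + (fun y => (1/(2*c)) * f y) y := by
        intro y; simp only [robinGreen, ← hcdef]; ring
      rw [robinSol]
      rw [intervalIntegral.integral_congr (g := fun y =>
        (fun y => (-(1/2)*c*x) * (y * f y)) y + (fun y => (-(1/2)) * (|x - y| * f y)) y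
          + (fun y => (1/(2*c)) * f y) y) (fun y _ => heq y)]
      rw [intervalIntegral.integral_add (hint1.add hint2) hint3,
        intervalIntegral.integral_add hint1 hint2,
        intervalIntegral.integral_const_mul, intervalIntegral.integral_const_mul,
        intervalIntegral.integral_const_mul]
    -- compute H x = ∫ |x - y| f y
    have hH : (∫ y in (-π)..π, |x - y| * f y) = 2 * V x + M₁ - x * M₀ := by
      have hsplit2 : (∫ y in (-π)..π, |x - y| * f y)
          = (∫ y in (-π)..x, |x - y| * f y) + ∫ y in x..π, |x - y| * f y :=
        (intervalIntegral.integral_add_adjacent_intervals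
          (hII _ habs _ _ hmemnπ hx) (hII _ habs _ _ hx hmemπ)).symm
      have h1 : (∫ y in (-π)..x, |x - y| * f y) = ∫ y in (-π)..x, (x - y) * f y := by
        refine intervalIntegral.integral_congr (fun y hy => ?_)
        rw [Set.uIcc_of_le hx.1] at hy
        rw [abs_of_nonneg (sub_nonneg.2 hy.2)]
      have h2 : (∫ y in x..π, |x - y| * f y) = ∫ y in x..π, (y - x) * f y := by
        refine intervalIntegral.integral_congr (fun y hy => ?_)
        rw [Set.uIcc_of_le hx.2] at hy
        rw [abs_of_nonpos (by linarith [hy.1] : x - y ≤ 0)]; ring_nf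
      have h3 : (∫ y in (-π)..x, (x - y) * f y)
          = x * (∫ y in (-π)..x, f y) - ∫ y in (-π)..x, y * f y := by
        rw [← intervalIntegral.integral_const_mul, ← intervalIntegral.integral_sub
          ((hfII _ _ hmemnπ hx).const_mul x)
          (hII (fun y => y) continuous_id _ _ hmemnπ hx)]
        congr 1; ext y; ring
      have h4 : (∫ y in x..π, (y - x) * f y)
          = (∫ y in x..π, y * f y) - x * ∫ y in x..π, f y := by
        rw [← intervalIntegral.integral_const_mul, ← intervalIntegral.integral_sub
          (hII (fun y => y) continuous_id _ _ hx hmemπ)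
          (hII (fun _ => x) continuous_const _ _ hx hmemπ)]
        congr 1; ext y; ring
      have hM₁split : M₁ = (∫ y in (-π)..x, y * f y) + ∫ y in x..π, y * f y :=
        (intervalIntegral.integral_add_adjacent_intervals
          (hII (fun y => y) continuous_id _ _ hmemnπ hx)
          (hII (fun y => y) continuous_id _ _ hx hmemπ)).symm
      have hM₀split : M₀ = (∫ y in (-π)..x, f y) + ∫ y in x..π, f y :=
        (intervalIntegral.integral_add_adjacent_intervals
          (hfII _ _ hmemnπ hx) (hfII _ _ hx hmemπ)).symm
      have hVx := hVeq x hx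
      rw [hsplit2, h1, h2, h3, h4]
      rw [hM₁split, hM₀split, hVx]
      ring
    rw [hsplit, hH, hVeq x hx]
    field_simp
    ring
  -- the pieces
  refine ⟨fun x => (M₀ - c*M₁)/2 - F x, fun x => -f x, ?_, ?_, ?_, ?_, ?_, ?_, ?_, ?_⟩
  · -- ContinuousOn u
    refine ContinuousOn.congr (f := fun x => (M₀/(2*c) - M₁/2) + (M₀ - c*M₁)/2 * x - V x)
      ?_ (fun x hx => key x hx)
    have hVcont : Continuous V := by
      exact continuous_iff_continuousAt.2 fun x => (hVderiv x).continuousAt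
    fun_prop
  · -- derivative
    intro x hx
    have hD : HasDerivAt (fun x => (M₀/(2*c) - M₁/2) + (M₀ - c*M₁)/2 * x - V x)
        ((M₀ - c*M₁)/2 - F x) x := by
      have h1 : HasDerivAt (fun x : ℝ => (M₀/(2*c) - M₁/2) + (M₀ - c*M₁)/2 * x)
          ((M₀ - c*M₁)/2) x := by
        simpa using ((hasDerivAt_id x).const_mul ((M₀ - c*M₁)/2)).const_add (M₀/(2*c) - M₁/2)
      exact h1.sub (hVderiv x)
    exact (hD.hasDerivWithinAt).congr (fun y hy => key y hy) (key x hx)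
  · -- ContinuousOn u'
    exact (continuous_const.sub hFcont).continuousOn
  · -- IntegrableOn u''
    exact hf.neg
  · -- absolute continuity of u'
    intro x hx
    show (M₀ - c*M₁)/2 - F x = ((M₀ - c*M₁)/2 - F (-π)) + ∫ t in (-π)..x, -f t
    have hFx : F x = ∫ t in (-π)..x, f t := by
      refine intervalIntegral.integral_congr (fun y hy => ?_)
      rw [Set.uIcc_of_le hx.1] at hy
      exact hgf ⟨hy.1, hy.2.trans hx.2⟩
    have hFnπ : F (-π) = 0 := intervalIntegral.integral_same
    rw [hFnπ, hFx, intervalIntegral.integral_neg]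
    ring
  · -- a.e. equation
    exact Filter.Eventually.of_forall fun x => neg_neg (f x)
  · -- boundary at -π
    have hu := key (-π) hmemnπ
    have hVnπ : V (-π) = 0 := intervalIntegral.integral_same
    have hFnπ : F (-π) = 0 := intervalIntegral.integral_same
    show -((M₀ - c*M₁)/2 - F (-π)) + α * robinSol α f (-π) = 0
    rw [hu, hVnπ, hFnπ]
    have hcne : c ≠ 0 := hcpos.ne'
    field_simp
    ring_nf
    linear_combination (c*M₁ - M₀) * hcmul
  · -- boundary at π
    have hu := key π hmemπ
    have hVπ : V π = π * M₀ - M₁ := by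
      rw [hM₀, hM₁]; exact hVeq π hmemπ
    have hFπ : F π = M₀ := by
      rw [hM₀]
      refine intervalIntegral.integral_congr (fun y hy => ?_)
      rw [Set.uIcc_of_le hπ] at hy
      exact hgf hy
    show ((M₀ - c*M₁)/2 - F π) + α * robinSol α f π = 0
    rw [hu, hVπ, hFπ]
    have hcne : c ≠ 0 := hcpos.ne'
    field_simp
    ring_nf
    linear_combination (-M₀ - c*M₁) * hcmul
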